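/- The potential H(V,W) = V·ln(V/W), defined for V > 0 and W > 0, satisfies the five integrability conditions H_VVVV·H_VV = 2H_VVV², H_VVVW·H_VV = 2H_VVW·H_VVV, H_VVWW·H_VV = 2H_VVW², H_VWWW·H_VV = 3H_VWW·H_VVW − H_WWW·H_VVV, and H_WWWW·H_VV = 6H_VWW² − 4H_WWW·H_VVW. -/

import Mathlib

noncomputable def pV (f : ℝ → ℝ → ℝ) : ℝ → ℝ → ℝ := fun v w => deriv (fun x => f x w) v
noncomputable def pW (f : ℝ → ℝ → ℝ) : ℝ → ℝ → ℝ := fun v w => deriv (fun y => f v y) w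

/-- The five integrability conditions for a potential `H(V,W)` at the point `(v, w)`.
Subscripts: `H_VVW = ∂³H/∂V²∂W`, etc. -/
def IntCond (H : ℝ → ℝ → ℝ) (v w : ℝ) : Prop :=
  pV (pV (pV (pV H))) v w * pV (pV H) v w = 2 * (pV (pV (pV H)) v w) ^ 2 ∧
  pW (pV (pV (pV H))) v w * pV (pV H) v w =
    2 * pW (pV (pV H)) v w * pV (pV (pV H)) v w ∧
  pW (pW (pV (pV H))) v w * pV (pV H) v w = 2 * (pW (pV (pV H)) v w) ^ 2 ∧
  pW (pW (pW (pV H))) v w * pV (pV H) v w =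
    3 * pW (pW (pV H)) v w * pW (pV (pV H)) v w -
      pW (pW (pW H)) v w * pV (pV (pV H)) v w ∧
  pW (pW (pW (pW H))) v w * pV (pV H) v w =
    6 * (pW (pW (pV H)) v w) ^ 2 - 4 * pW (pW (pW H)) v w * pW (pV (pV H)) v w

noncomputable def Hfun : ℝ → ℝ → ℝ := fun V W => V * Real.log (V / W)

open Filter in
lemma hV : ∀ v w : ℝ, 0 < v → 0 < w → pV Hfun v w = Real.log v - Real.log w + 1 := by
  intro v w hv hw
  have h1 : HasDerivAt (fun x : ℝ => Real.log (x / w)) ((v / w)⁻¹ * (1 / w)) v := by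
    exact (Real.hasDerivAt_log (by positivity)).comp v ((hasDerivAt_id v).div_const w)
  have h2 : HasDerivAt (fun x : ℝ => x * Real.log (x / w))
      (1 * Real.log (v / w) + v * ((v / w)⁻¹ * (1 / w))) v := (hasDerivAt_id v).mul h1
  have := h2.deriv
  simp only [pV, Hfun]
  rw [this, Real.log_div hv.ne' hw.ne']
  field_simp

open Filter in
lemma hVV : ∀ v w : ℝ, 0 < v → 0 < w → pV (pV Hfun) v w = v⁻¹ := by
  intro v w hv hw
  have he : (fun x => pV Hfun x w) =ᶠ[nhds v] (fun x => Real.log x - Real.log w + 1) := by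
    filter_upwards [eventually_gt_nhds hv] with x hx
    exact hV x w hx hw
  have : deriv (fun x : ℝ => Real.log x - Real.log w + 1) v = v⁻¹ := by
    exact (((Real.hasDerivAt_log hv.ne').sub_const _).add_const 1).deriv
  simpa [pV, this] using he.deriv_eq

open Filter in
lemma hVVV : ∀ v w : ℝ, 0 < v → 0 < w → pV (pV (pV Hfun)) v w = -(v⁻¹ * v⁻¹) := by
  intro v w hv hw
  have he : (fun x => pV (pV Hfun) x w) =ᶠ[nhds v] (fun x : ℝ => x⁻¹) := by
    filter_upwards [eventually_gt_nhds hv] with x hx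
    exact hVV x w hx hw
  have : deriv (fun x : ℝ => x⁻¹) v = -(v⁻¹ * v⁻¹) := by
    rw [(hasDerivAt_inv hv.ne').deriv]
    field_simp
  simpa [pV, this] using he.deriv_eq

open Filter in
lemma hVVVV : ∀ v w : ℝ, 0 < v → 0 < w →
    pV (pV (pV (pV Hfun))) v w = 2 * (v⁻¹ * v⁻¹ * v⁻¹) := by
  intro v w hv hw
  have he : (fun x => pV (pV (pV Hfun)) x w) =ᶠ[nhds v] (fun x : ℝ => -(x⁻¹ * x⁻¹)) := by
    filter_upwards [eventually_gt_nhds hv] with x hx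
    exact hVVV x w hx hw
  have : deriv (fun x : ℝ => -(x⁻¹ * x⁻¹)) v = 2 * (v⁻¹ * v⁻¹ * v⁻¹) := by
    rw [HasDerivAt.deriv (f := fun x : ℝ => -(x⁻¹ * x⁻¹)) (((hasDerivAt_inv hv.ne').mul (hasDerivAt_inv hv.ne')).neg)]
    field_simp
    ring
  simpa [pV, this] using he.deriv_eq

open Filter in
lemma hW : ∀ v w : ℝ, 0 < v → 0 < w → pW Hfun v w = -(v * w⁻¹) := by
  intro v w hv hw
  have he : (fun y => Hfun v y) =ᶠ[nhds w]
      (fun y : ℝ => v * (Real.log v - Real.log y)) := by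
    filter_upwards [eventually_gt_nhds hw] with y hy
    simp [Hfun, Real.log_div hv.ne' hy.ne']
  have h1 : HasDerivAt (fun y : ℝ => v * (Real.log v - Real.log y)) (v * (0 - w⁻¹)) w := by
    exact ((hasDerivAt_const w (Real.log v)).sub (Real.hasDerivAt_log hw.ne')).const_mul v
  have := h1.deriv
  simp only [pW]
  rw [he.deriv_eq, this]
  ring

open Filter in
lemma hWW : ∀ v w : ℝ, 0 < v → 0 < w → pW (pW Hfun) v w = v * (w⁻¹ * w⁻¹) := by
  intro v w hv hw
  have he : (fun y => pW Hfun v y) =ᶠ[nhds w] (fun y : ℝ => -(v * y⁻¹)) := by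
    filter_upwards [eventually_gt_nhds hw] with y hy
    exact hW v y hv hy
  have : deriv (fun y : ℝ => -(v * y⁻¹)) w = v * (w⁻¹ * w⁻¹) := by
    rw [HasDerivAt.deriv (f := fun y : ℝ => -(v * y⁻¹)) (((hasDerivAt_inv hw.ne').const_mul v).neg), pow_two, mul_inv]
    ring
  simpa [pW, this] using he.deriv_eq

open Filter in
lemma hWWW : ∀ v w : ℝ, 0 < v → 0 < w →
    pW (pW (pW Hfun)) v w = -(2 * v * (w⁻¹ * w⁻¹ * w⁻¹)) := by
  intro v w hv hw
  have he : (fun y => pW (pW Hfun) v y) =ᶠ[nhds w] (fun y : ℝ => v * (y⁻¹ * y⁻¹)) := by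
    filter_upwards [eventually_gt_nhds hw] with y hy
    exact hWW v y hv hy
  have : deriv (fun y : ℝ => v * (y⁻¹ * y⁻¹)) w = -(2 * v * (w⁻¹ * w⁻¹ * w⁻¹)) := by
    rw [HasDerivAt.deriv (f := fun y : ℝ => v * (y⁻¹ * y⁻¹)) (((hasDerivAt_inv hw.ne').mul (hasDerivAt_inv hw.ne')).const_mul v)]
    field_simp
    ring
  simpa [pW, this] using he.deriv_eq

open Filter in
lemma hWWWW : ∀ v w : ℝ, 0 < v → 0 < w →
    pW (pW (pW (pW Hfun))) v w = 6 * v * (w⁻¹ * w⁻¹ * w⁻¹ * w⁻¹) := by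
  intro v w hv hw
  have he : (fun y => pW (pW (pW Hfun)) v y) =ᶠ[nhds w]
      (fun y : ℝ => -(2 * v * (y⁻¹ * y⁻¹ * y⁻¹))) := by
    filter_upwards [eventually_gt_nhds hw] with y hy
    exact hWWW v y hv hy
  have : deriv (fun y : ℝ => -(2 * v * (y⁻¹ * y⁻¹ * y⁻¹))) w
      = 6 * v * (w⁻¹ * w⁻¹ * w⁻¹ * w⁻¹) := by
    rw [HasDerivAt.deriv (f := fun y : ℝ => -(2 * v * (y⁻¹ * y⁻¹ * y⁻¹))) (((((hasDerivAt_inv hw.ne').mul (hasDerivAt_inv hw.ne')).mul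
      (hasDerivAt_inv hw.ne')).const_mul (2 * v)).neg)]
    simp only [Pi.mul_apply]
    field_simp
    ring
  simpa [pW, this] using he.deriv_eq

open Filter in
lemma hVW : ∀ v w : ℝ, 0 < v → 0 < w → pW (pV Hfun) v w = -w⁻¹ := by
  intro v w hv hw
  have he : (fun y => pV Hfun v y) =ᶠ[nhds w]
      (fun y : ℝ => Real.log v - Real.log y + 1) := by
    filter_upwards [eventually_gt_nhds hw] with y hy
    exact hV v y hv hy
  have : deriv (fun y : ℝ => Real.log v - Real.log y + 1) w = -w⁻¹ := by
    have h1 : HasDerivAt (fun y : ℝ => Real.log v - Real.log y + 1) (0 - w⁻¹) w :=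
      ((hasDerivAt_const w (Real.log v)).sub (Real.hasDerivAt_log hw.ne')).add_const 1
    rw [h1.deriv]; ring
  simpa [pW, this] using he.deriv_eq

open Filter in
lemma hVWW : ∀ v w : ℝ, 0 < v → 0 < w → pW (pW (pV Hfun)) v w = w⁻¹ * w⁻¹ := by
  intro v w hv hw
  have he : (fun y => pW (pV Hfun) v y) =ᶠ[nhds w] (fun y : ℝ => -y⁻¹) := by
    filter_upwards [eventually_gt_nhds hw] with y hy
    exact hVW v y hv hy
  have : deriv (fun y : ℝ => -y⁻¹) w = w⁻¹ * w⁻¹ := by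
    rw [HasDerivAt.deriv (f := fun y : ℝ => -y⁻¹) ((hasDerivAt_inv hw.ne').neg), pow_two, mul_inv]
    ring
  simpa [pW, this] using he.deriv_eq

open Filter in
lemma hVWWW : ∀ v w : ℝ, 0 < v → 0 < w →
    pW (pW (pW (pV Hfun))) v w = -(2 * (w⁻¹ * w⁻¹ * w⁻¹)) := by
  intro v w hv hw
  have he : (fun y => pW (pW (pV Hfun)) v y) =ᶠ[nhds w] (fun y : ℝ => y⁻¹ * y⁻¹) := by
    filter_upwards [eventually_gt_nhds hw] with y hy
    exact hVWW v y hv hy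
  have : deriv (fun y : ℝ => y⁻¹ * y⁻¹) w = -(2 * (w⁻¹ * w⁻¹ * w⁻¹)) := by
    rw [HasDerivAt.deriv (f := fun y : ℝ => y⁻¹ * y⁻¹) ((hasDerivAt_inv hw.ne').mul (hasDerivAt_inv hw.ne'))]
    field_simp
    ring
  simpa [pW, this] using he.deriv_eq

open Filter in
lemma hVVW : ∀ v w : ℝ, 0 < v → 0 < w → pW (pV (pV Hfun)) v w = 0 := by
  intro v w hv hw
  have he : (fun y => pV (pV Hfun) v y) =ᶠ[nhds w] (fun _ : ℝ => v⁻¹) := by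
    filter_upwards [eventually_gt_nhds hw] with y hy
    exact hVV v y hv hy
  simpa [pW] using he.deriv_eq

open Filter in
lemma hVVWW : ∀ v w : ℝ, 0 < v → 0 < w → pW (pW (pV (pV Hfun))) v w = 0 := by
  intro v w hv hw
  have he : (fun y => pW (pV (pV Hfun)) v y) =ᶠ[nhds w] (fun _ : ℝ => (0 : ℝ)) := by
    filter_upwards [eventually_gt_nhds hw] with y hy
    exact hVVW v y hv hy
  simpa [pW] using he.deriv_eq

open Filter in
lemma hVVVW : ∀ v w : ℝ, 0 < v → 0 < w → pW (pV (pV (pV Hfun))) v w = 0 := by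
  intro v w hv hw
  have he : (fun y => pV (pV (pV Hfun)) v y) =ᶠ[nhds w]
      (fun _ : ℝ => -(v⁻¹ * v⁻¹)) := by
    filter_upwards [eventually_gt_nhds hw] with y hy
    exact hVVV v y hv hy
  simpa [pW] using he.deriv_eq

theorem stmt_3 :
    ∀ v w : ℝ, 0 < v → 0 < w → IntCond (fun V W => V * Real.log (V / W)) v w := by
  intro v w hv hw
  have hH : (fun V W => V * Real.log (V / W)) = Hfun := rfl
  rw [hH]
  unfold IntCond
  rw [hVV v w hv hw, hVVV v w hv hw, hVVVV v w hv hw,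
    hWWW v w hv hw, hWWWW v w hv hw, hVWW v w hv hw, hVWWW v w hv hw,
    hVVW v w hv hw, hVVWW v w hv hw, hVVVW v w hv hw]
  have hv' := hv.ne'
  have hw' := hw.ne'
  refine ⟨by ring, by ring, by ring, by field_simp; ring, by field_simp; ring⟩
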